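/- Let T > 0, let A : [0,T] → [0,∞) be continuous, nondecreasing with A(0) = 0, with Lebesgue–Stieltjes measure dA, let μ > 0, n ≥ 0, t ∈ [0,T], and let h : [0,T] → ℝ be Borel measurable and dA-integrable on (t,T]. Then ( ∫_{(t,T]} e^{−n(s−t)} h(s) dA(s) )² ≤ (1/μ) ∫_{(t,T]} e^{−2n(s−t)} e^{μ(A(s) − A(t))} h(s)² dA(s). -/

import Mathlib

open MeasureTheory Set Real
open scoped ENNReal

lemma neglog_lintegral_le : ∫⁻ x in Ioi (0:ℝ), ENNReal.ofReal (-Real.log x) ≤ 1 := by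
  have hsplit : (Ioi (0:ℝ)) = Ioc (0:ℝ) 1 ∪ Ioi 1 := (Ioc_union_Ioi_eq_Ioi (by norm_num)).symm
  rw [hsplit, lintegral_union measurableSet_Ioi Ioc_disjoint_Ioi_same]
  have h2 : ∫⁻ x in Ioi (1:ℝ), ENNReal.ofReal (-Real.log x) = 0 := by
    rw [setLIntegral_congr_fun_ae measurableSet_Ioi
      (ae_of_all _ (fun x hx => by
        rw [ENNReal.ofReal_eq_zero.2 (by
          simpa using Real.log_nonneg (le_of_lt hx)) ]))]
    simp
  rw [h2, add_zero]
  -- monotone limit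
  have hFm : Measurable fun x : ℝ => ENNReal.ofReal (-Real.log x) :=
    Real.measurable_log.neg.ennreal_ofReal
  set F : ℝ → ℝ≥0∞ := fun x => ENNReal.ofReal (-Real.log x) with hF
  set G : ℕ → ℝ → ℝ≥0∞ := fun k => (Ioc ((k:ℝ)+1)⁻¹ 1).indicator F with hG
  have hGm : ∀ k, Measurable (G k) := fun k => hFm.indicator measurableSet_Ioc
  have hmono : Monotone G := by
    intro a b hab
    apply Set.indicator_le_indicator_of_subset
    · apply Ioc_subset_Ioc_left
      apply inv_anti₀ (by positivity)
      have : (a:ℝ) ≤ b := Nat.cast_le.2 hab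
      linarith
    · intro x; exact zero_le
  have hsup : ∀ x, (⨆ k, G k x) = (Ioc (0:ℝ) 1).indicator F x := by
    intro x
    by_cases hx : x ∈ Ioc (0:ℝ) 1
    · rw [Set.indicator_of_mem hx]
      obtain ⟨k, hk⟩ := exists_nat_gt (1/x)
      apply le_antisymm
      · exact iSup_le fun k => Set.indicator_le_self _ _ x
      · refine le_iSup_of_le k ?_
        rw [hG]; simp only []
        rw [Set.indicator_of_mem]
        refine ⟨?_, hx.2⟩
        rw [inv_lt_comm₀ (by positivity) hx.1]
        calc x⁻¹ = 1/x := (one_div x).symm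
          _ < k := hk
          _ ≤ k + 1 := by linarith
    · rw [Set.indicator_of_notMem hx]
      refine le_antisymm (iSup_le fun k => ?_) zero_le
      rw [hG]; simp only []; rw [Set.indicator_of_notMem]
      intro hmem
      exact hx ⟨lt_trans (by positivity) hmem.1, hmem.2⟩
  calc ∫⁻ x in Ioc (0:ℝ) 1, F x = ∫⁻ x, (Ioc (0:ℝ) 1).indicator F x := by
        rw [lintegral_indicator measurableSet_Ioc]
    _ = ∫⁻ x, ⨆ k, G k x := by simp_rw [hsup]
    _ = ⨆ k, ∫⁻ x, G k x := lintegral_iSup hGm hmono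
    _ ≤ 1 := by
        apply iSup_le
        intro k
        have hε : (0:ℝ) < ((k:ℝ)+1)⁻¹ := by positivity
        have hε1 : ((k:ℝ)+1)⁻¹ ≤ 1 := by
          rw [inv_le_one_iff₀]; right; linarith [Nat.cast_nonneg (α := ℝ) k]
        set ε : ℝ := ((k:ℝ)+1)⁻¹
        have hint : IntegrableOn (fun x : ℝ => -Real.log x) (Ioc ε 1) volume := by
          have : IntervalIntegrable Real.log volume ε 1 := by
            open intervalIntegral in
            exact intervalIntegrable_log (Set.notMem_uIcc_of_lt hε one_pos)
          exact this.1.neg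
        have hnn : 0 ≤ᵐ[volume.restrict (Ioc ε 1)] fun x : ℝ => -Real.log x := by
          refine (ae_restrict_iff' measurableSet_Ioc).2 (ae_of_all _ fun x hx => ?_)
          simpa using Real.log_nonpos (le_of_lt (lt_trans hε hx.1)) hx.2
        rw [hG]
        simp only []
        rw [lintegral_indicator measurableSet_Ioc]
        rw [← ofReal_integral_eq_lintegral_ofReal hint hnn]
        have hval : ∫ x in Ioc ε 1, -Real.log x = 1 - ε + ε * Real.log ε := by
          have hlog : ∫ x in ε..1, Real.log x
              = 1 * Real.log 1 - ε * Real.log ε - 1 + ε := by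
            open intervalIntegral in
            rw [integral_log]
          rw [← intervalIntegral.integral_of_le hε1, intervalIntegral.integral_neg, hlog]
          simp; ring
        rw [hval]
        have : 1 - ε + ε * Real.log ε ≤ 1 := by
          have h1 : Real.log ε ≤ 0 := Real.log_nonpos hε.le hε1
          nlinarith
        calc ENNReal.ofReal (1 - ε + ε * Real.log ε) ≤ ENNReal.ofReal 1 :=
              ENNReal.ofReal_le_ofReal this
          _ = 1 := ENNReal.ofReal_one

lemma key_exp_bound
    (T : ℝ) (A : ℝ → ℝ)
    (hA_cont : ContinuousOn A (Icc 0 T))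
    (hA_mono : MonotoneOn A (Icc 0 T))
    (ν : Measure ℝ)
    (hν : ∀ a b : ℝ, 0 ≤ a → a ≤ b → b ≤ T → ν (Ioc a b) = ENNReal.ofReal (A b - A a))
    (μ : ℝ) (hμ : 0 < μ)
    (t : ℝ) (ht : t ∈ Icc 0 T) :
    ∫⁻ s in Ioc t T, ENNReal.ofReal (Real.exp (-(μ * (A s - A t)))) ∂ν
      ≤ ENNReal.ofReal (1 / μ) := by
  have hsub : Ioc t T ⊆ Icc 0 T := fun s hs => ⟨le_trans ht.1 hs.1.le, hs.2⟩
  have hAae : AEMeasurable A (ν.restrict (Ioc t T)) :=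
    (hA_cont.mono hsub).aemeasurable measurableSet_Ioc
  have f_mble : AEMeasurable (fun s => Real.exp (-(μ * (A s - A t))))
      (ν.restrict (Ioc t T)) :=
    Real.measurable_exp.comp_aemeasurable (((hAae.sub aemeasurable_const).const_mul μ).neg)
  rw [lintegral_eq_lintegral_meas_lt _ (ae_of_all _ fun s => (Real.exp_pos _).le) f_mble]
  have hbound : ∀ l ∈ Ioi (0:ℝ),
      (ν.restrict (Ioc t T)) {s | l < Real.exp (-(μ * (A s - A t)))}
        ≤ ENNReal.ofReal (1/μ * (-Real.log l)) := by
    intro l hl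
    have hl0 : (0:ℝ) < l := hl
    rw [Measure.restrict_apply' measurableSet_Ioc]
    by_cases hl1 : 1 ≤ l
    · have hempty : {s | l < Real.exp (-(μ * (A s - A t)))} ∩ Ioc t T = ∅ := by
        rw [Set.eq_empty_iff_forall_notMem]
        rintro s ⟨hs1, hs2⟩
        have hAs : A t ≤ A s := hA_mono ht (hsub hs2) hs2.1.le
        have : Real.exp (-(μ * (A s - A t))) ≤ 1 := by
          rw [Real.exp_le_one_iff]
          have : 0 ≤ μ * (A s - A t) := mul_nonneg hμ.le (by linarith)
          linarith
        have := hs1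
        simp only [Set.mem_setOf_eq] at this
        linarith
      rw [hempty]
      simp
    · push_neg at hl1
      have hlogneg : Real.log l < 0 := Real.log_neg hl0 hl1
      set L : ℝ := 1/μ * (-Real.log l) with hLdef
      have hL : 0 < L := by
        apply mul_pos (by positivity); linarith
      set S' : Set ℝ := Icc t T ∩ A ⁻¹' Iic (A t + L) with hS'
      have htS' : t ∈ S' := ⟨⟨le_rfl, ht.2⟩, by simp only [Set.mem_preimage, Set.mem_Iic]; linarith⟩
      have hclosed : IsClosed S' :=
        ((hA_cont.mono (Icc_subset_Icc ht.1 le_rfl)).preimage_isClosed_of_isClosed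
          isClosed_Icc isClosed_Iic)
      have hbdd : BddAbove S' := (bddAbove_Icc).mono Set.inter_subset_left
      set c : ℝ := sSup S' with hc
      have hcmem : c ∈ S' := hclosed.csSup_mem ⟨t, htS'⟩ hbdd
      have hsubset : {s | l < Real.exp (-(μ * (A s - A t)))} ∩ Ioc t T ⊆ Ioc t c := by
        rintro s ⟨hs1, hs2⟩
        refine ⟨hs2.1, le_csSup hbdd ⟨⟨hs2.1.le, hs2.2⟩, ?_⟩⟩
        simp only [Set.mem_setOf_eq] at hs1
        have hlog : Real.log l < -(μ * (A s - A t)) := by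
          rw [Real.log_lt_iff_lt_exp hl0]; exact hs1
        have : μ * (A s - A t) < -Real.log l := by linarith
        simp only [Set.mem_preimage, Set.mem_Iic]
        have h3 : A s - A t < (-Real.log l)/μ := (lt_div_iff₀' hμ).2 (by linarith)
        have h4 : 1/μ * -Real.log l = (-Real.log l)/μ := by ring
        linarith
      calc ν ({s | l < Real.exp (-(μ * (A s - A t)))} ∩ Ioc t T) ≤ ν (Ioc t c) :=
            measure_mono hsubset
        _ = ENNReal.ofReal (A c - A t) := hν t c ht.1 hcmem.1.1 hcmem.1.2
        _ ≤ ENNReal.ofReal L := by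
            apply ENNReal.ofReal_le_ofReal
            have := hcmem.2
            simp only [Set.mem_preimage, Set.mem_Iic] at this
            linarith
  calc ∫⁻ l in Ioi 0, (ν.restrict (Ioc t T)) {s | l < Real.exp (-(μ * (A s - A t)))}
      ≤ ∫⁻ l in Ioi 0, ENNReal.ofReal (1/μ * (-Real.log l)) :=
        setLIntegral_mono ((measurable_const.mul Real.measurable_log.neg).ennreal_ofReal) hbound
    _ = ENNReal.ofReal (1/μ) * ∫⁻ l in Ioi 0, ENNReal.ofReal (-Real.log l) := by
        simp_rw [ENNReal.ofReal_mul (by positivity : (0:ℝ) ≤ 1/μ)]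
        rw [lintegral_const_mul' _ _ ENNReal.ofReal_ne_top]
    _ ≤ ENNReal.ofReal (1/μ) * 1 := mul_le_mul_right neglog_lintegral_le _
    _ = ENNReal.ofReal (1/μ) := mul_one _


/-- Step 4 of the proof of Theorem 3.3: weighted Cauchy–Schwarz estimate for
Stieltjes integrals,
`(∫_{(t,T]} e^{−n(s−t)} h dA)² ≤ (1/μ) ∫_{(t,T]} e^{−2n(s−t)} e^{μ(A(s)−A(t))} h² dA`. -/
theorem stmt8
    (T : ℝ) (hT : 0 < T)
    (A : ℝ → ℝ)
    (hA_cont : ContinuousOn A (Icc 0 T))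
    (hA_mono : MonotoneOn A (Icc 0 T))
    (hA0 : A 0 = 0)
    (hA_nonneg : ∀ s ∈ Icc 0 T, 0 ≤ A s)
    (ν : Measure ℝ)
    (hν : ∀ a b : ℝ, 0 ≤ a → a ≤ b → b ≤ T → ν (Ioc a b) = ENNReal.ofReal (A b - A a))
    (μ : ℝ) (hμ : 0 < μ)
    (n : ℝ) (hn : 0 ≤ n)
    (t : ℝ) (ht : t ∈ Icc 0 T)
    (h : ℝ → ℝ) (hmeas : Measurable h)
    (hint : IntegrableOn h (Ioc t T) ν) :
    ENNReal.ofReal ((∫ s in Ioc t T, Real.exp (-(n * (s - t))) * h s ∂ν) ^ 2)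
      ≤ ENNReal.ofReal (1 / μ) *
          ∫⁻ s in Ioc t T,
            ENNReal.ofReal
              (Real.exp (-(2 * n * (s - t))) * Real.exp (μ * (A s - A t)) * (h s) ^ 2) ∂ν := by
  have h0t : 0 ≤ t := ht.1
  have hsub : Ioc t T ⊆ Icc 0 T := fun s hs => ⟨le_trans h0t hs.1.le, hs.2⟩
  have hAae : AEMeasurable A (ν.restrict (Ioc t T)) :=
    (hA_cont.mono hsub).aemeasurable measurableSet_Ioc
  set g : ℝ → ℝ := fun s => Real.exp (-(n * (s - t))) * h s with hg
  have hgmeas : Measurable g := (((measurable_id.sub_const t).const_mul n).neg.exp).mul hmeas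
  have hg_int : IntegrableOn g (Ioc t T) ν := by
    apply Integrable.mono hint hgmeas.aestronglyMeasurable
    refine (ae_restrict_iff' measurableSet_Ioc).2 (ae_of_all _ fun s hs => ?_)
    rw [hg]
    simp only [norm_mul, Real.norm_eq_abs, abs_of_pos (Real.exp_pos _)]
    calc Real.exp (-(n*(s-t))) * |h s| ≤ 1 * |h s| := by
          apply mul_le_mul_of_nonneg_right _ (abs_nonneg _)
          rw [Real.exp_le_one_iff]
          have : 0 ≤ n * (s - t) := mul_nonneg hn (by linarith [hs.1])
          linarith
      _ = |h s| := one_mul _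
  set F1 : ℝ → ℝ≥0∞ := fun s => ENNReal.ofReal (Real.exp (-(μ * (A s - A t)) / 2)) with hF1
  set F2 : ℝ → ℝ≥0∞ := fun s =>
    ENNReal.ofReal (Real.exp (-(n * (s - t))) * Real.exp (μ * (A s - A t) / 2) * |h s|) with hF2
  have hmul : ∀ s, (F1 * F2) s = ENNReal.ofReal |g s| := by
    intro s
    rw [Pi.mul_apply, hF1, hF2, hg]
    simp only []
    rw [← ENNReal.ofReal_mul (Real.exp_nonneg _)]
    congr 1
    rw [abs_mul, abs_of_pos (Real.exp_pos _)]
    have e : Real.exp (-(μ*(A s - A t))/2) *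
        (Real.exp (-(n*(s-t))) * Real.exp (μ*(A s - A t)/2) * |h s|)
      = (Real.exp (-(μ*(A s - A t))/2) * Real.exp (μ*(A s - A t)/2)) *
        (Real.exp (-(n*(s-t))) * |h s|) := by ring
    rw [e, ← Real.exp_add]
    rw [show -(μ*(A s - A t))/2 + μ*(A s - A t)/2 = 0 by ring, Real.exp_zero, one_mul]
  have hsq : ∀ x : ℝ, 0 ≤ x → ENNReal.ofReal x ^ (2:ℝ) = ENNReal.ofReal (x^2) := by
    intro x hx
    rw [ENNReal.ofReal_rpow_of_nonneg hx (by norm_num), Real.rpow_two]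
  have hF1sq : ∀ s, F1 s ^ (2:ℝ) = ENNReal.ofReal (Real.exp (-(μ * (A s - A t)))) := by
    intro s
    rw [hF1]
    simp only []
    rw [hsq _ (Real.exp_nonneg _)]
    congr 1
    rw [← Real.exp_nat_mul]
    congr 1
    push_cast
    ring
  have hF2sq : ∀ s, F2 s ^ (2:ℝ)
      = ENNReal.ofReal (Real.exp (-(2*n*(s-t))) * Real.exp (μ*(A s - A t)) * (h s)^2) := by
    intro s
    rw [hF2]
    simp only []
    rw [hsq _ (by positivity)]
    congr 1
    rw [mul_pow, mul_pow, sq_abs, ← Real.exp_nat_mul, ← Real.exp_nat_mul,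
      show ((2:ℕ):ℝ) * (-(n*(s-t))) = -(2*n*(s-t)) by push_cast; ring,
      show ((2:ℕ):ℝ) * (μ*(A s - A t)/2) = μ*(A s - A t) by push_cast; ring]
  have hmeasF1 : AEMeasurable F1 (ν.restrict (Ioc t T)) :=
    (Real.measurable_exp.comp_aemeasurable
      ((((hAae.sub aemeasurable_const).const_mul μ).neg).div_const 2)).ennreal_ofReal
  have hmeasF2 : AEMeasurable F2 (ν.restrict (Ioc t T)) := by
    apply AEMeasurable.ennreal_ofReal
    apply AEMeasurable.mul
    · exact ((((measurable_id.sub_const t).const_mul n).neg.exp).aemeasurable.mul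
        (Real.measurable_exp.comp_aemeasurable
          (((hAae.sub aemeasurable_const).const_mul μ).div_const 2)))
    · exact hmeas.abs.aemeasurable
  have hpq : Real.HolderConjugate 2 2 := Real.HolderConjugate.two_two
  have holder := ENNReal.lintegral_mul_le_Lp_mul_Lq (ν.restrict (Ioc t T)) hpq hmeasF1 hmeasF2
  set I := ∫ s in Ioc t T, g s ∂ν with hI
  have e1 : ENNReal.ofReal (I ^ 2) = ENNReal.ofReal |I| ^ 2 := by
    rw [← sq_abs, ENNReal.ofReal_pow (abs_nonneg _)]
  have e2 : ENNReal.ofReal |I| ≤ ∫⁻ s in Ioc t T, ENNReal.ofReal |g s| ∂ν := by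
    calc ENNReal.ofReal |I| ≤ ENNReal.ofReal (∫ s in Ioc t T, |g s| ∂ν) := by
          apply ENNReal.ofReal_le_ofReal
          calc |I| = ‖I‖ := (Real.norm_eq_abs _).symm
            _ ≤ ∫ s in Ioc t T, ‖g s‖ ∂ν := norm_integral_le_integral_norm _
            _ = ∫ s in Ioc t T, |g s| ∂ν := by simp_rw [Real.norm_eq_abs]
      _ = ∫⁻ s in Ioc t T, ENNReal.ofReal |g s| ∂ν :=
          ofReal_integral_eq_lintegral_ofReal hg_int.abs (ae_of_all _ fun s => abs_nonneg _)
  have e3 : ∫⁻ s in Ioc t T, ENNReal.ofReal |g s| ∂ν = ∫⁻ s, (F1 * F2) s ∂(ν.restrict (Ioc t T)) := by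
    apply lintegral_congr
    intro s
    rw [hmul]
  have e5 : ((∫⁻ s, F1 s ^ (2:ℝ) ∂(ν.restrict (Ioc t T))) ^ ((1:ℝ)/2) *
        (∫⁻ s, F2 s ^ (2:ℝ) ∂(ν.restrict (Ioc t T))) ^ ((1:ℝ)/2)) ^ 2
      = (∫⁻ s, F1 s ^ (2:ℝ) ∂(ν.restrict (Ioc t T))) *
        (∫⁻ s, F2 s ^ (2:ℝ) ∂(ν.restrict (Ioc t T))) := by
    rw [mul_pow, ← ENNReal.rpow_natCast (_ ^ ((1:ℝ)/2)) 2, ← ENNReal.rpow_natCast (_ ^ ((1:ℝ)/2)) 2,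
      ← ENNReal.rpow_mul, ← ENNReal.rpow_mul]
    norm_num
  have ekey : ∫⁻ s, F1 s ^ (2:ℝ) ∂(ν.restrict (Ioc t T)) ≤ ENNReal.ofReal (1/μ) := by
    calc ∫⁻ s, F1 s ^ (2:ℝ) ∂(ν.restrict (Ioc t T))
        = ∫⁻ s in Ioc t T, ENNReal.ofReal (Real.exp (-(μ * (A s - A t)))) ∂ν :=
          lintegral_congr fun s => hF1sq s
      _ ≤ ENNReal.ofReal (1/μ) := key_exp_bound T A hA_cont hA_mono ν hν μ hμ t ht
  have efinal : ∫⁻ s, F2 s ^ (2:ℝ) ∂(ν.restrict (Ioc t T))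
      = ∫⁻ s in Ioc t T,
          ENNReal.ofReal (Real.exp (-(2*n*(s-t))) * Real.exp (μ*(A s - A t)) * (h s)^2) ∂ν :=
    lintegral_congr fun s => hF2sq s
  calc ENNReal.ofReal (I ^ 2) = ENNReal.ofReal |I| ^ 2 := e1
    _ ≤ (∫⁻ s, (F1 * F2) s ∂(ν.restrict (Ioc t T))) ^ 2 := by
        rw [← e3]; exact pow_le_pow_left₀ zero_le e2 2
    _ ≤ ((∫⁻ s, F1 s ^ (2:ℝ) ∂(ν.restrict (Ioc t T))) ^ ((1:ℝ)/2) *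
        (∫⁻ s, F2 s ^ (2:ℝ) ∂(ν.restrict (Ioc t T))) ^ ((1:ℝ)/2)) ^ 2 :=
        pow_le_pow_left₀ zero_le holder 2
    _ = (∫⁻ s, F1 s ^ (2:ℝ) ∂(ν.restrict (Ioc t T))) *
        (∫⁻ s, F2 s ^ (2:ℝ) ∂(ν.restrict (Ioc t T))) := e5
    _ ≤ ENNReal.ofReal (1/μ) * (∫⁻ s, F2 s ^ (2:ℝ) ∂(ν.restrict (Ioc t T))) :=
        mul_le_mul_left ekey _
    _ = ENNReal.ofReal (1/μ) *
          ∫⁻ s in Ioc t T,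
            ENNReal.ofReal (Real.exp (-(2*n*(s-t))) * Real.exp (μ*(A s - A t)) * (h s)^2) ∂ν := by
        rw [efinal]
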